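/- Let (Y,d,μ) be an Ahlfors-regular probability metric measure space with a Lipschitz action of Γ = ⟨S⟩ that has a spectral gap in L²(Y,μ;X) with constant κ, i.e., Σ_{s∈S}∫_Y‖f(u)−f(su)‖²du ≥ κ∫∫_{Y²}‖f(u)−f(v)‖²du dv for all f ∈ L²(Y,μ;X). Fix t ≥ 1/diam Y, a (1/t)-separated set Z with partition {U_z} as above, and the graph G(t) on vertex set Z with edges z∼y iff (∃s∈S: U_y∩sU_z≠∅) or d(y,z) ≤ 3/t. Then for every f : Z → X, #S·Σ_{z∼y}‖f(z)−f(y)‖² ≥ (κ/(K³·#Z))·Σ_{z,y∈Z}‖f(z)−f(y)‖², where K = C·2ᵐ. -/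

import Mathlib

open MeasureTheory

attribute [local instance] Classical.propDecidable

open scoped ENNReal NNReal

lemma step_int {Y : Type*} [MeasurableSpace Y] (μ : Measure Y) [IsFiniteMeasure μ]
    {ι : Type*} (I : Finset ι) (V : ι → Set Y)
    (hVmeas : ∀ i ∈ I, MeasurableSet (V i))
    (iOf : Y → ι) (hmem : ∀ u, iOf u ∈ I) (hin : ∀ u, u ∈ V (iOf u))
    (hout : ∀ u, ∀ i ∈ I, i ≠ iOf u → u ∉ V i)
    (ρ : ι → ℝ) :
    Integrable (fun u => ρ (iOf u)) μ ∧
      ∫ u, ρ (iOf u) ∂μ = ∑ i ∈ I, (μ (V i)).toReal * ρ i := by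
  have hfun : (fun u => ρ (iOf u)) =
      fun u => ∑ i ∈ I, (V i).indicator (fun _ => ρ i) u := by
    funext u
    rw [Finset.sum_eq_single_of_mem (iOf u) (hmem u)]
    · simp [Set.indicator_of_mem (hin u)]
    · intro i hi hne
      simp [Set.indicator_of_notMem (hout u i hi hne)]
  constructor
  · rw [hfun]
    exact integrable_finset_sum _ fun i hi =>
      (integrable_const (ρ i)).indicator (hVmeas i hi)
  · rw [hfun, integral_finset_sum _
      (fun i hi => (integrable_const (ρ i)).indicator (hVmeas i hi))]
    refine Finset.sum_congr rfl fun i hi => ?_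
    rw [integral_indicator_const _ (hVmeas i hi), smul_eq_mul]; rfl

lemma stmt13_alg1 (K n T κ : ℝ) (hK : K ≠ 0) (hn : n ≠ 0) :
    κ / (K ^ 3 * n) * T = (n / K) * (κ * ((1 / (K * n)) * (1 / (K * n)) * T)) := by
  field_simp

lemma stmt13_alg2 (K n E s : ℝ) (hK : K ≠ 0) (hn : n ≠ 0) :
    (n / K) * (s * ((K / n) * E)) = s * E := by
  field_simp

/-- Spectral gap implies expansion at a fixed level `t`: under Ahlfors regularity and a
measure-preserving action of `Γ = ⟨S⟩` with spectral gap `κ` in `L²(Y,μ;X)`, the graph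
`G(t)` on a `(1/t)`-separated set `Z` (with edges given by `∃ s ∈ S, U_y ∩ sU_z ≠ ∅` or
`d(y,z) ≤ 3/t`) satisfies the Poincaré inequality
`#S·Σ_{z∼y}‖f(z)-f(y)‖² ≥ (κ/(K³·#Z))·Σ_{z,y}‖f(z)-f(y)‖²` with `K = C·2^m`. -/
theorem stmt13 {Γ Y X : Type*} [Group Γ] [MetricSpace Y] [MeasurableSpace Y]
    [MulAction Γ Y]
    (μ : Measure Y) [IsProbabilityMeasure μ]
    [NormedAddCommGroup X] [NormedSpace ℝ X] [CompleteSpace X]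
    (c m C : ℝ) (hc : 0 < c) (hm : 0 < m) (hC : 1 ≤ C)
    (hAhlfors : ∀ (y : Y) (r : ℝ), 0 < r → r ≤ Metric.diam (Set.univ : Set Y) →
      ENNReal.ofReal (c * r ^ m) ≤ μ (Metric.ball y r) ∧
        μ (Metric.ball y r) ≤ ENNReal.ofReal (c * C * r ^ m))
    (S : Finset Γ) (hSsymm : ∀ s ∈ S, s⁻¹ ∈ S)
    (hmp : ∀ s ∈ S, MeasurePreserving (fun y : Y => s • y) μ μ)
    (κ : ℝ) (hκ : 0 < κ)
    (hgap : ∀ f : Y → X, MemLp f 2 μ →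
      (∑ s ∈ S, ∫ u, ‖f u - f (s • u)‖ ^ 2 ∂μ)
        ≥ κ * ∫ u, ∫ v, ‖f u - f v‖ ^ 2 ∂μ ∂μ)
    (t : ℝ) (ht : 0 < t) (ht' : 1 / Metric.diam (Set.univ : Set Y) ≤ t)
    (Z : Finset Y)
    (hsep : ∀ x ∈ Z, ∀ y ∈ Z, x ≠ y → 1 / t < dist x y)
    (U : Y → Set Y) (hmeas : ∀ z ∈ Z, MeasurableSet (U z))
    (hpart : ∀ u : Y, ∃! z, z ∈ Z ∧ u ∈ U z)
    (hU : ∀ z ∈ Z, Metric.ball z (1 / (2 * t)) ⊆ U z ∧ U z ⊆ Metric.ball z (1 / t))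
    (f : Y → X) :
    (S.card : ℝ) *
        (∑ z ∈ Z, ∑ y ∈ Z,
          if (∃ s ∈ S, (U y ∩ (fun u => s • u) '' U z).Nonempty) ∨ dist y z ≤ 3 / t
            then ‖f z - f y‖ ^ 2 else 0)
      ≥ (κ / ((C * 2 ^ m) ^ 3 * Z.card)) * ∑ z ∈ Z, ∑ y ∈ Z, ‖f z - f y‖ ^ 2 := by
  classical
  have hEnn : (0:ℝ) ≤ ∑ z ∈ Z, ∑ y ∈ Z,
      (if (∃ s ∈ S, (U y ∩ (fun u => s • u) '' U z).Nonempty) ∨ dist y z ≤ 3 / t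
        then ‖f z - f y‖ ^ 2 else 0) := by
    refine Finset.sum_nonneg fun z _ => Finset.sum_nonneg fun y _ => ?_
    split_ifs
    · positivity
    · exact le_refl _
  by_cases hsub : ∀ z ∈ Z, ∀ y ∈ Z, z = y
  · have hT : ∑ z ∈ Z, ∑ y ∈ Z, ‖f z - f y‖ ^ 2 = 0 := by
      refine Finset.sum_eq_zero fun z hz => Finset.sum_eq_zero fun y hy => ?_
      rw [hsub z hz y hy]; simp
    rw [hT, mul_zero]
    exact mul_nonneg (Nat.cast_nonneg _) hEnn
  push_neg at hsub
  obtain ⟨z₀, hz₀, y₀, hy₀, hzy₀⟩ := hsub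
  -- boundedness and diameter
  have hcover : (Set.univ : Set Y) ⊆ ⋃ z ∈ Z, U z := fun u _ => by
    obtain ⟨z, ⟨hzZ, hu⟩, -⟩ := hpart u
    exact Set.mem_biUnion hzZ hu
  have hbdd : Bornology.IsBounded (Set.univ : Set Y) :=
    (((Bornology.isBounded_biUnion Z.finite_toSet).2
      fun z hz => Metric.isBounded_ball.subset (hU z hz).2).subset hcover)
  have htpos : (0:ℝ) < 1 / t := by positivity
  have hd2 : 1 / t ≤ Metric.diam (Set.univ : Set Y) :=
    le_trans (hsep z₀ hz₀ y₀ hy₀ hzy₀).le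
      (Metric.dist_le_diam_of_mem hbdd trivial trivial)
  have hr1pos : (0:ℝ) < 1 / (2 * t) := by positivity
  have hr1le : (1:ℝ) / (2 * t) ≤ 1 / t := by
    rw [div_le_div_iff₀ (by positivity) ht]; linarith
  have hr1d : 1 / (2 * t) ≤ Metric.diam (Set.univ : Set Y) := le_trans hr1le hd2
  -- constants
  have h2m : (0:ℝ) < 2 ^ m := Real.rpow_pos_of_pos two_pos m
  set K : ℝ := C * 2 ^ m with hKdef
  have hKpos : (0:ℝ) < K := mul_pos (lt_of_lt_of_le one_pos hC) h2m
  set n : ℝ := (Z.card : ℝ) with hndef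
  have hnpos : (0:ℝ) < n := by
    have h0 : 0 < Z.card := Finset.card_pos.2 ⟨z₀, hz₀⟩
    rw [hndef]
    exact_mod_cast h0
  -- measure bounds
  have hUlb : ∀ z ∈ Z, ENNReal.ofReal (c * (1 / (2 * t)) ^ m) ≤ μ (U z) := fun z hz =>
    le_trans (hAhlfors z _ hr1pos hr1d).1 (measure_mono (hU z hz).1)
  have hUub : ∀ z ∈ Z, μ (U z) ≤ ENNReal.ofReal (c * C * (1 / t) ^ m) := fun z hz =>
    le_trans (measure_mono (hU z hz).2) (hAhlfors z _ htpos hd2).2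
  have hdisj : (Z : Set Y).PairwiseDisjoint U := by
    intro a ha b hb hab
    refine Set.disjoint_left.2 fun u hua hub => hab ?_
    exact (hpart u).unique ⟨ha, hua⟩ ⟨hb, hub⟩
  have hcovEq : ⋃ z ∈ Z, U z = Set.univ := Set.univ_subset_iff.1 hcover
  have hsum1 : ∑ z ∈ Z, μ (U z) = 1 := by
    rw [← measure_biUnion_finset hdisj (fun z hz => hmeas z hz), hcovEq, measure_univ]
  have hapos : (0:ℝ) < c * (1 / (2 * t)) ^ m :=
    mul_pos hc (Real.rpow_pos_of_pos hr1pos m)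
  have hbpos : (0:ℝ) < c * C * (1 / t) ^ m :=
    mul_pos (mul_pos hc (lt_of_lt_of_le one_pos hC)) (Real.rpow_pos_of_pos htpos m)
  have hna : n * (c * (1 / (2 * t)) ^ m) ≤ 1 := by
    have h1 : ENNReal.ofReal (n * (c * (1 / (2 * t)) ^ m)) ≤ 1 := by
      rw [ENNReal.ofReal_mul hnpos.le, hndef, ENNReal.ofReal_natCast, ← hsum1]
      calc (Z.card : ℝ≥0∞) * ENNReal.ofReal (c * (1 / (2 * t)) ^ m)
          = ∑ _z ∈ Z, ENNReal.ofReal (c * (1 / (2 * t)) ^ m) := by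
            rw [Finset.sum_const, nsmul_eq_mul]
        _ ≤ ∑ z ∈ Z, μ (U z) := Finset.sum_le_sum hUlb
    exact ENNReal.ofReal_le_one.1 h1
  have hnb : 1 ≤ n * (c * C * (1 / t) ^ m) := by
    have h1 : (1 : ℝ≥0∞) ≤ ENNReal.ofReal (n * (c * C * (1 / t) ^ m)) := by
      rw [ENNReal.ofReal_mul hnpos.le, hndef, ENNReal.ofReal_natCast, ← hsum1]
      calc ∑ z ∈ Z, μ (U z) ≤ ∑ _z ∈ Z, ENNReal.ofReal (c * C * (1 / t) ^ m) :=
            Finset.sum_le_sum hUub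
        _ = (Z.card : ℝ≥0∞) * ENNReal.ofReal (c * C * (1 / t) ^ m) := by
            rw [Finset.sum_const, nsmul_eq_mul]
    exact ENNReal.one_le_ofReal.1 h1
  have hr1eq : (1 : ℝ) / (2 * t) = (1 / t) / 2 := by ring
  have hrpow_eq : (1 / (2 * t)) ^ m = (1 / t) ^ m / 2 ^ m := by
    rw [hr1eq, Real.div_rpow (by positivity) (by norm_num)]
  have hlbz : ∀ z ∈ Z, 1 / (K * n) ≤ (μ (U z)).toReal := by
    intro z hz
    have h1 : c * (1 / (2 * t)) ^ m ≤ (μ (U z)).toReal :=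
      (ENNReal.ofReal_le_iff_le_toReal (measure_ne_top μ _)).1 (hUlb z hz)
    refine le_trans ?_ h1
    rw [hrpow_eq, hKdef, div_le_iff₀ (by positivity)]
    have heq : c * ((1 / t) ^ m / 2 ^ m) * (C * 2 ^ m * n)
        = n * (c * C * (1 / t) ^ m) := by
      field_simp
    linarith [hnb]
  have hubz : ∀ z ∈ Z, (μ (U z)).toReal ≤ K / n := by
    intro z hz
    have h1 : (μ (U z)).toReal ≤ c * C * (1 / t) ^ m :=
      ENNReal.toReal_le_of_le_ofReal hbpos.le (hUub z hz)
    refine le_trans h1 ?_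
    have hna' : n * c * (1 / t) ^ m ≤ 2 ^ m := by
      have h := hna
      rw [hrpow_eq] at h
      have heq : n * (c * ((1 / t) ^ m / 2 ^ m))
          = (n * c * (1 / t) ^ m) / 2 ^ m := by ring
      rw [heq, div_le_one h2m] at h
      exact h
    rw [hKdef, le_div_iff₀ hnpos]
    nlinarith [hna', mul_le_mul_of_nonneg_left hna' (le_trans zero_le_one hC)]
  -- partition selector
  choose zOf hzZ hzU using fun u => (hpart u).exists
  have huniq : ∀ u, ∀ i ∈ Z, i ≠ zOf u → u ∉ U i := fun u i hi hne hu =>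
    hne ((hpart u).unique ⟨hi, hu⟩ ⟨hzZ u, hzU u⟩)
  have hstepU := fun ρ : Y → ℝ => step_int μ Z U hmeas zOf hzZ hzU huniq ρ
  -- Memℒp of the step function
  have hgstep : (fun u => f (zOf u)) =
      fun u => ∑ z ∈ Z, (U z).indicator (fun _ => f z) u := by
    funext u
    rw [Finset.sum_eq_single_of_mem (zOf u) (hzZ u)]
    · simp [Set.indicator_of_mem (hzU u)]
    · intro i hi hne
      simp [Set.indicator_of_notMem (huniq u i hi hne)]
  have hgmem : MemLp (fun u => f (zOf u)) 2 μ := by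
    rw [hgstep]
    exact memLp_finset_sum _ fun z hz =>
      memLp_indicator_const 2 (hmeas z hz) (f z) (Or.inr (measure_ne_top μ _))
  set T : ℝ := ∑ z ∈ Z, ∑ y ∈ Z, ‖f z - f y‖ ^ 2 with hTdef
  have hgap' := hgap (fun u => f (zOf u)) hgmem
  -- double integral identity
  have hdbl : ∫ u, ∫ v, ‖f (zOf u) - f (zOf v)‖ ^ 2 ∂μ ∂μ
      = ∑ z ∈ Z, ∑ y ∈ Z,
          ((μ (U z)).toReal * (μ (U y)).toReal) * ‖f z - f y‖ ^ 2 := by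
    have h1 : ∀ u : Y, ∫ v, ‖f (zOf u) - f (zOf v)‖ ^ 2 ∂μ
        = ∑ y ∈ Z, (μ (U y)).toReal * ‖f (zOf u) - f y‖ ^ 2 := fun u =>
      (hstepU (fun y => ‖f (zOf u) - f y‖ ^ 2)).2
    calc ∫ u, ∫ v, ‖f (zOf u) - f (zOf v)‖ ^ 2 ∂μ ∂μ
        = ∫ u, ∑ y ∈ Z, (μ (U y)).toReal * ‖f (zOf u) - f y‖ ^ 2 ∂μ := by
          simp only [h1]
      _ = ∑ y ∈ Z, ∫ u, (μ (U y)).toReal * ‖f (zOf u) - f y‖ ^ 2 ∂μ := by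
          exact integral_finset_sum _ fun y hy =>
            ((hstepU (fun z => ‖f z - f y‖ ^ 2)).1).const_mul _
      _ = ∑ y ∈ Z, (μ (U y)).toReal * ∫ u, ‖f (zOf u) - f y‖ ^ 2 ∂μ := by
          exact Finset.sum_congr rfl fun y _ => integral_const_mul _ _
      _ = ∑ y ∈ Z, (μ (U y)).toReal *
            ∑ z ∈ Z, (μ (U z)).toReal * ‖f z - f y‖ ^ 2 := by
          exact Finset.sum_congr rfl fun y _ => by
            rw [(hstepU (fun z => ‖f z - f y‖ ^ 2)).2]
      _ = ∑ y ∈ Z, ∑ z ∈ Z,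
            ((μ (U z)).toReal * (μ (U y)).toReal) * ‖f z - f y‖ ^ 2 := by
          exact Finset.sum_congr rfl fun y _ => by
            rw [Finset.mul_sum]
            exact Finset.sum_congr rfl fun z _ => by ring
      _ = ∑ z ∈ Z, ∑ y ∈ Z,
            ((μ (U z)).toReal * (μ (U y)).toReal) * ‖f z - f y‖ ^ 2 :=
          Finset.sum_comm
  -- lower bound on double integral
  have hlb2 : (1 / (K * n)) * (1 / (K * n)) * T
      ≤ ∫ u, ∫ v, ‖f (zOf u) - f (zOf v)‖ ^ 2 ∂μ ∂μ := by
    rw [hdbl, hTdef]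
    have hrw : (1 / (K * n)) * (1 / (K * n)) *
        (∑ z ∈ Z, ∑ y ∈ Z, ‖f z - f y‖ ^ 2)
        = ∑ z ∈ Z, ∑ y ∈ Z,
            ((1 / (K * n)) * (1 / (K * n))) * ‖f z - f y‖ ^ 2 := by
      simp [Finset.mul_sum]
    rw [hrw]
    refine Finset.sum_le_sum fun z hz => Finset.sum_le_sum fun y hy => ?_
    refine mul_le_mul_of_nonneg_right ?_ (by positivity)
    have h1 := hlbz z hz
    have h2 := hlbz y hy
    have hlbnn : (0:ℝ) ≤ 1 / (K * n) := by positivity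
    exact mul_le_mul h1 h2 hlbnn ENNReal.toReal_nonneg
  -- shift integral identity and bound
  set E : ℝ := ∑ z ∈ Z, ∑ y ∈ Z,
      (if (∃ s ∈ S, (U y ∩ (fun u => s • u) '' U z).Nonempty) ∨ dist y z ≤ 3 / t
        then ‖f z - f y‖ ^ 2 else 0) with hEdef
  have hshift_le : ∀ s ∈ S,
      ∫ u, ‖f (zOf u) - f (zOf (s • u))‖ ^ 2 ∂μ ≤ (K / n) * E := by
    intro s hs
    have hkey := step_int μ (Z ×ˢ Z)
      (fun p => U p.1 ∩ (fun u => s • u) ⁻¹' U p.2)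
      (fun p hp => (hmeas p.1 (Finset.mem_product.1 hp).1).inter
        ((hmp s hs).measurable (hmeas p.2 (Finset.mem_product.1 hp).2)))
      (fun u => (zOf u, zOf (s • u)))
      (fun u => Finset.mem_product.2 ⟨hzZ u, hzZ (s • u)⟩)
      (fun u => ⟨hzU u, hzU (s • u)⟩)
      (fun u p hp hne hup => hne (Prod.ext
        ((hpart u).unique ⟨(Finset.mem_product.1 hp).1, hup.1⟩ ⟨hzZ u, hzU u⟩)
        ((hpart (s • u)).unique ⟨(Finset.mem_product.1 hp).2, hup.2⟩
          ⟨hzZ (s • u), hzU (s • u)⟩)))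
      (fun p => ‖f p.1 - f p.2‖ ^ 2)
    rw [hkey.2, Finset.sum_product]
    have hrw : (K / n) * E = ∑ z ∈ Z, ∑ y ∈ Z, (K / n) *
        (if (∃ s ∈ S, (U y ∩ (fun u => s • u) '' U z).Nonempty) ∨ dist y z ≤ 3 / t
          then ‖f z - f y‖ ^ 2 else 0) := by
      simp [hEdef, Finset.mul_sum]
    rw [hrw]
    refine Finset.sum_le_sum fun z hz => Finset.sum_le_sum fun y hy => ?_
    by_cases hne : (U z ∩ (fun u => s • u) ⁻¹' U y).Nonempty
    · obtain ⟨u, hu1, hu2⟩ := hne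
      have hcond : (∃ s ∈ S, (U y ∩ (fun u => s • u) '' U z).Nonempty)
          ∨ dist y z ≤ 3 / t :=
        Or.inl ⟨s, hs, ⟨s • u, hu2, ⟨u, hu1, rfl⟩⟩⟩
      rw [if_pos hcond]
      refine mul_le_mul_of_nonneg_right ?_ (by positivity)
      exact le_trans (ENNReal.toReal_mono (measure_ne_top μ _)
        (measure_mono Set.inter_subset_left)) (hubz z hz)
    · rw [Set.not_nonempty_iff_eq_empty.1 hne]
      simp only [measure_empty, ENNReal.toReal_zero, zero_mul]
      refine mul_nonneg (by positivity) ?_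
      split_ifs
      · positivity
      · exact le_refl _
  have hsumS : (∑ s ∈ S, ∫ u, ‖f (zOf u) - f (zOf (s • u))‖ ^ 2 ∂μ)
      ≤ (S.card : ℝ) * ((K / n) * E) := by
    calc (∑ s ∈ S, ∫ u, ‖f (zOf u) - f (zOf (s • u))‖ ^ 2 ∂μ)
        ≤ ∑ _s ∈ S, (K / n) * E := Finset.sum_le_sum hshift_le
      _ = (S.card : ℝ) * ((K / n) * E) := by rw [Finset.sum_const, nsmul_eq_mul]
  -- combine
  have hmain : κ * ((1 / (K * n)) * (1 / (K * n)) * T)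
      ≤ (S.card : ℝ) * ((K / n) * E) := by
    refine le_trans ?_ hsumS
    refine le_trans ?_ hgap'
    exact mul_le_mul_of_nonneg_left hlb2 hκ.le
  have hfinal := mul_le_mul_of_nonneg_left hmain (div_nonneg hnpos.le hKpos.le)
  calc (κ / (K ^ 3 * n)) * T
      = (n / K) * (κ * ((1 / (K * n)) * (1 / (K * n)) * T)) :=
        stmt13_alg1 K n T κ hKpos.ne' hnpos.ne'
    _ ≤ (n / K) * ((S.card : ℝ) * ((K / n) * E)) := hfinal
    _ = (S.card : ℝ) * E := stmt13_alg2 K n E _ hKpos.ne' hnpos.ne'
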